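/- arXiv:2601.14488 — 3 statements merged into one kernel-verified Lean document; each statement's English description precedes it below -/
import Mathlib

section
/- Let q be a natural number. Suppose {(x_c, y_c, w_c)}_{c=1}^C is a quadrature rule on the square sqr that is exact of degree q (∫_{sqr} r(x,y) dx dy = Σ_c w_c r(x_c, y_c) for every bivariate real polynomial r of total degree at most q), and {(z_e, v_e)}_{e=1}^E is a quadrature rule on (-1,1) exact of degree q+2 (∫_{-1}^{1} g = Σ_e v_e g(z_e) for every univariate polynomial g of degree at most q+2). Then for every real polynomial p in three variables of total degree at most q, writing α_e = (1 - z_e)/2, one has ∫_{pyr} p(x,y,z) dx dy dz = Σ_{e=1}^E Σ_{c=1}^C α_e² v_e w_c p(α_e x_c, α_e y_c, z_e); that is, the algebraic construction yields a quadrature rule exact of degree q on the pyramid. -/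
open MeasureTheory Set


noncomputable def Iv (n : ℕ) : ℝ := (1 - (-1:ℝ)^(n+1))/(n+1)

lemma integral_Ioo_pow (n : ℕ) {β : ℝ} (hβ : 0 ≤ β) :
    ∫ x in Set.Ioo (-β) β, x^n = β^(n+1) * Iv n := by
  rw [← MeasureTheory.integral_Ioc_eq_integral_Ioo,
    ← intervalIntegral.integral_of_le (by linarith : -β ≤ β), integral_pow, Iv, neg_pow]
  ring

lemma Iv_eq (n : ℕ) : ∫ x in Set.Ioo (-1:ℝ) 1, x^n = Iv n := by
  simpa using integral_Ioo_pow n (by norm_num : (0:ℝ) ≤ 1)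

lemma sqr_eq : {u : ℝ×ℝ | |u.1| < 1 ∧ |u.2| < 1} = Set.Ioo (-1:ℝ) 1 ×ˢ Set.Ioo (-1:ℝ) 1 := by
  ext u; simp [Set.mem_prod, abs_lt]

lemma sq_int (a b : ℕ) :
    ∫ u in {u : ℝ×ℝ | |u.1| < 1 ∧ |u.2| < 1}, u.1^a * u.2^b = Iv a * Iv b := by
  rw [sqr_eq, Measure.volume_eq_prod,
    MeasureTheory.setIntegral_prod_mul (fun x => x^a) (fun y => y^b), Iv_eq, Iv_eq]

lemma T_open : IsOpen {v : ℝ×ℝ×ℝ | |v.1| < 1 ∧ |v.2.1| < (1-v.1)/2 ∧ |v.2.2| < (1-v.1)/2} := by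
  simp only [Set.setOf_and]
  exact ((isOpen_lt (by fun_prop) (by fun_prop)).inter
    ((isOpen_lt (by fun_prop) (by fun_prop)).inter (isOpen_lt (by fun_prop) (by fun_prop))))

lemma T_sub : {v : ℝ×ℝ×ℝ | |v.1| < 1 ∧ |v.2.1| < (1-v.1)/2 ∧ |v.2.2| < (1-v.1)/2} ⊆
    Set.Icc (-1:ℝ) 1 ×ˢ (Set.Icc (-1:ℝ) 1 ×ˢ Set.Icc (-1:ℝ) 1) := by
  rintro ⟨t, x, y⟩ ⟨h1, h2, h3⟩
  rw [abs_lt] at h1 h2 h3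
  simp only [Set.mem_prod, Set.mem_Icc]
  refine ⟨⟨h1.1.le, h1.2.le⟩, ⟨?_, ?_⟩, ?_, ?_⟩ <;> [skip; skip; skip; skip] <;> linarith

lemma T_int (a b c : ℕ) :
    Integrable (({v : ℝ×ℝ×ℝ | |v.1| < 1 ∧ |v.2.1| < (1-v.1)/2 ∧ |v.2.2| < (1-v.1)/2}).indicator
      (fun v : ℝ×ℝ×ℝ => v.2.1^a * v.2.2^b * v.1^c)) := by
  rw [integrable_indicator_iff T_open.measurableSet]
  refine IntegrableOn.mono_set ?_ T_sub
  exact ContinuousOn.integrableOn_compact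
    (isCompact_Icc.prod (isCompact_Icc.prod isCompact_Icc)) (by fun_prop)

lemma pyr_slice (a b c : ℕ) :
    (∫ u in {u : ℝ × ℝ × ℝ |
        |u.2.2| < 1 ∧ |u.1| < (1 - u.2.2)/2 ∧ |u.2.1| < (1 - u.2.2)/2},
      u.1^a * u.2.1^b * u.2.2^c)
    = ∫ t in Set.Ioo (-1:ℝ) 1,
        ((1-t)/2)^(a+1) * Iv a * ((((1-t)/2)^(b+1) * Iv b) * t^c) := by
  set S : Set (ℝ × ℝ × ℝ) := {u | |u.2.2| < 1 ∧ |u.1| < (1 - u.2.2)/2 ∧ |u.2.1| < (1 - u.2.2)/2}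
  set T : Set (ℝ × ℝ × ℝ) := {v | |v.1| < 1 ∧ |v.2.1| < (1-v.1)/2 ∧ |v.2.2| < (1-v.1)/2}
  set e : ℝ × ℝ × ℝ ≃ᵐ ℝ × ℝ × ℝ :=
    (MeasurableEquiv.prodComm : ℝ × ℝ × ℝ ≃ᵐ (ℝ × ℝ) × ℝ).trans MeasurableEquiv.prodAssoc with he
  have hep : MeasurePreserving e volume volume := by
    exact (volume_preserving_prodAssoc).comp
      (Measure.measurePreserving_swap (μ := (volume : Measure ℝ)) (ν := (volume : Measure (ℝ × ℝ))))
  have hpre : e ⁻¹' S = T := rfl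
  have h1 : (∫ u in S, u.1^a * u.2.1^b * u.2.2^c)
      = ∫ v in T, v.2.1^a * v.2.2^b * v.1^c := by
    rw [← hep.setIntegral_preimage_emb e.measurableEmbedding
      (fun u : ℝ × ℝ × ℝ => u.1^a * u.2.1^b * u.2.2^c) S, hpre]
    rfl
  rw [h1, ← integral_indicator T_open.measurableSet, Measure.volume_eq_prod,
    integral_prod _ (Measure.volume_eq_prod ℝ (ℝ × ℝ) ▸ T_int a b c)]
  have key : ∀ t : ℝ, (∫ p : ℝ × ℝ, T.indicator (fun v : ℝ×ℝ×ℝ => v.2.1^a * v.2.2^b * v.1^c) (t, p))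
      = (Set.Ioo (-1:ℝ) 1).indicator
          (fun t => ((1-t)/2)^(a+1) * Iv a * ((((1-t)/2)^(b+1) * Iv b) * t^c)) t := by
    intro t
    by_cases ht : t ∈ Set.Ioo (-1:ℝ) 1
    · have ht' : |t| < 1 := abs_lt.mpr ⟨ht.1, ht.2⟩
      have hα : (0:ℝ) ≤ (1-t)/2 := by have := ht.1; linarith [ht.2]
      have hind : ∀ p : ℝ × ℝ, T.indicator (fun v : ℝ×ℝ×ℝ => v.2.1^a * v.2.2^b * v.1^c) (t, p)
          = ((Set.Ioo (-((1-t)/2)) ((1-t)/2)) ×ˢ (Set.Ioo (-((1-t)/2)) ((1-t)/2))).indicator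
              (fun p : ℝ × ℝ => p.1^a * (p.2^b * t^c)) p := by
        intro p
        simp only [Set.indicator_apply, Set.mem_setOf_eq, Set.mem_prod, Set.mem_Ioo, T,
          abs_lt, ht', true_and, ht.1, ht.2, mul_assoc]
      rw [integral_congr_ae (Filter.Eventually.of_forall hind),
        integral_indicator (measurableSet_Ioo.prod measurableSet_Ioo),
        Measure.volume_eq_prod,
        MeasureTheory.setIntegral_prod_mul (fun x => x^a) (fun y => y^b * t^c),
        integral_mul_const, integral_Ioo_pow a hα, integral_Ioo_pow b hα,
        Set.indicator_of_mem ht]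
    · have hz : ∀ p : ℝ × ℝ, T.indicator (fun v : ℝ×ℝ×ℝ => v.2.1^a * v.2.2^b * v.1^c) (t, p) = 0 := by
        intro p
        apply Set.indicator_of_notMem
        intro h
        exact ht (Set.mem_Ioo.mpr (abs_lt.mp h.1))
      simp [hz, Set.indicator_of_notMem ht]
  rw [integral_congr_ae (Filter.Eventually.of_forall key)]
  rw [integral_indicator measurableSet_Ioo]

lemma S_sub : {u : ℝ×ℝ×ℝ | |u.2.2| < 1 ∧ |u.1| < (1-u.2.2)/2 ∧ |u.2.1| < (1-u.2.2)/2} ⊆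
    Set.Icc (-1:ℝ) 1 ×ˢ (Set.Icc (-1:ℝ) 1 ×ˢ Set.Icc (-1:ℝ) 1) := by
  rintro ⟨x, y, t⟩ ⟨h1, h2, h3⟩
  rw [abs_lt] at h1 h2 h3
  simp only [Set.mem_prod, Set.mem_Icc]
  refine ⟨⟨?_, ?_⟩, ⟨?_, ?_⟩, ?_, ?_⟩ <;> linarith

lemma S_int (a b c : ℕ) (r : ℝ) :
    IntegrableOn (fun u : ℝ×ℝ×ℝ => r * (u.1^a * u.2.1^b * u.2.2^c))
      {u : ℝ×ℝ×ℝ | |u.2.2| < 1 ∧ |u.1| < (1-u.2.2)/2 ∧ |u.2.1| < (1-u.2.2)/2} := by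
  refine IntegrableOn.mono_set ?_ S_sub
  exact ContinuousOn.integrableOn_compact
    (isCompact_Icc.prod (isCompact_Icc.prod isCompact_Icc)) (by fun_prop)

/-- The algebraic construction: a degree-`q` exact rule on the square
combined with a degree-`(q+2)` exact rule on `(-1,1)` yields a degree-`q` exact rule
on the pyramid. -/
theorem algebraic_construction_rule_exact_on_pyramid
    (q C E : ℕ) (nd : Fin C → ℝ × ℝ) (w : Fin C → ℝ) (z v : Fin E → ℝ)
    (hndSqr : ∀ c, |(nd c).1| < 1 ∧ |(nd c).2| < 1)
    (hsqr : ∀ r : MvPolynomial (Fin 2) ℝ, r.totalDegree ≤ q →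
      (∫ u in {u : ℝ × ℝ | |u.1| < 1 ∧ |u.2| < 1},
          MvPolynomial.eval ![u.1, u.2] r) =
        ∑ c, w c * MvPolynomial.eval ![(nd c).1, (nd c).2] r)
    (hzLine : ∀ e, z e ∈ Set.Ioo (-1 : ℝ) 1)
    (hline : ∀ g : Polynomial ℝ, g.natDegree ≤ q + 2 →
      (∫ x in Set.Ioo (-1 : ℝ) 1, g.eval x) = ∑ e, v e * g.eval (z e)) :
    ∀ p : MvPolynomial (Fin 3) ℝ, p.totalDegree ≤ q →
      (∫ u in {u : ℝ × ℝ × ℝ |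
            |u.2.2| < 1 ∧ |u.1| < (1 - u.2.2) / 2 ∧ |u.2.1| < (1 - u.2.2) / 2},
          MvPolynomial.eval ![u.1, u.2.1, u.2.2] p) =
        ∑ e, ∑ c, ((1 - z e) / 2) ^ 2 * v e * w c *
          MvPolynomial.eval
            ![((1 - z e) / 2) * (nd c).1, ((1 - z e) / 2) * (nd c).2, z e] p := by
  intro p hp
  -- per-monomial key identity
  have key : ∀ a b c : ℕ, a + b + c ≤ q →
      (∫ u in {u : ℝ × ℝ × ℝ |
            |u.2.2| < 1 ∧ |u.1| < (1 - u.2.2) / 2 ∧ |u.2.1| < (1 - u.2.2) / 2},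
          u.1^a * u.2.1^b * u.2.2^c) =
        ∑ e, ∑ cc, ((1 - z e) / 2) ^ 2 * v e * w cc *
          ((((1 - z e) / 2) * (nd cc).1)^a * (((1 - z e) / 2) * (nd cc).2)^b * (z e)^c) := by
    intro a b c habc
    have hsq2 : Iv a * Iv b = ∑ cc, w cc * ((nd cc).1^a * (nd cc).2^b) := by
      have hdeg : (MvPolynomial.X 0 ^ a * MvPolynomial.X 1 ^ b :
          MvPolynomial (Fin 2) ℝ).totalDegree ≤ q := by
        refine le_trans (MvPolynomial.totalDegree_mul _ _) ?_
        rw [MvPolynomial.totalDegree_X_pow, MvPolynomial.totalDegree_X_pow]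
        omega
      have h3 := hsqr _ hdeg
      simp only [map_mul, map_pow, MvPolynomial.eval_X, Matrix.cons_val_zero,
        Matrix.cons_val_one, Matrix.head_cons] at h3
      rw [sq_int a b] at h3
      exact h3
    set g : Polynomial ℝ := Polynomial.C (Iv a * Iv b) *
        (Polynomial.C (2⁻¹:ℝ) * (1 - Polynomial.X))^(a+b+2) * Polynomial.X^c with hg
    have hgeval : ∀ t : ℝ,
        ((1-t)/2)^(a+1) * Iv a * ((((1-t)/2)^(b+1) * Iv b) * t^c) = Polynomial.eval t g := by
      intro t
      simp only [hg, Polynomial.eval_mul, Polynomial.eval_pow, Polynomial.eval_C,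
        Polynomial.eval_sub, Polynomial.eval_one, Polynomial.eval_X]
      ring
    have hgdeg : g.natDegree ≤ q + 2 := by
      have h1 : (Polynomial.C (2⁻¹:ℝ) * (1 - Polynomial.X)).natDegree ≤ 1 := by
        refine le_trans Polynomial.natDegree_mul_le ?_
        have h0 := Polynomial.natDegree_sub_le (1 : Polynomial ℝ) Polynomial.X
        simp only [Polynomial.natDegree_C, Polynomial.natDegree_X,
          Polynomial.natDegree_one, zero_add] at h0 ⊢
        omega
      have h2 : ((Polynomial.C (2⁻¹:ℝ) * (1 - Polynomial.X))^(a+b+2)).natDegree ≤ a+b+2 := by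
        refine le_trans (Polynomial.natDegree_pow_le) ?_
        calc (a+b+2) * (Polynomial.C (2⁻¹:ℝ) * (1 - Polynomial.X)).natDegree
            ≤ (a+b+2) * 1 := Nat.mul_le_mul_left _ h1
          _ = a+b+2 := by omega
      refine le_trans Polynomial.natDegree_mul_le ?_
      rw [Polynomial.natDegree_X_pow]
      have h4 : (Polynomial.C (Iv a * Iv b) *
          (Polynomial.C (2⁻¹:ℝ) * (1 - Polynomial.X))^(a+b+2)).natDegree ≤ a+b+2 := by
        refine le_trans Polynomial.natDegree_mul_le ?_
        rw [Polynomial.natDegree_C]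
        omega
      omega
    rw [pyr_slice a b c]
    simp_rw [hgeval]
    rw [hline g hgdeg]
    refine Finset.sum_congr rfl fun e _ => ?_
    rw [← hgeval (z e)]
    calc v e * (((1 - z e)/2)^(a+1) * Iv a * ((((1 - z e)/2)^(b+1) * Iv b) * (z e)^c))
        = v e * (((1 - z e)/2)^2 * ((1 - z e)/2)^a * ((1 - z e)/2)^b * (z e)^c *
            (Iv a * Iv b)) := by ring
      _ = ∑ cc, ((1 - z e) / 2) ^ 2 * v e * w cc *
          ((((1 - z e) / 2) * (nd cc).1)^a * (((1 - z e) / 2) * (nd cc).2)^b * (z e)^c) := by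
          rw [hsq2, Finset.mul_sum, Finset.mul_sum]
          refine Finset.sum_congr rfl fun cc _ => ?_
          rw [mul_pow, mul_pow]
          ring
  -- expansion of eval into monomials
  have expand : ∀ x y t : ℝ, MvPolynomial.eval ![x, y, t] p
      = ∑ d ∈ p.support, MvPolynomial.coeff d p * (x ^ d 0 * y ^ d 1 * t ^ d 2) := by
    intro x y t
    rw [MvPolynomial.eval_eq']
    refine Finset.sum_congr rfl fun d _ => ?_
    rw [Fin.prod_univ_three]
    norm_num [Matrix.cons_val_two, Matrix.tail_cons, Matrix.head_cons]
  have hdeg : ∀ d ∈ p.support, d 0 + d 1 + d 2 ≤ q := by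
    intro d hd
    have h1 := MvPolynomial.le_totalDegree hd
    have h2 : (d.sum fun _ e => e) = d 0 + d 1 + d 2 := by
      rw [Finsupp.sum_fintype _ _ (fun _ => rfl), Fin.sum_univ_three]
    omega
  simp_rw [expand]
  rw [MeasureTheory.integral_finset_sum p.support
    (f := fun d (u : ℝ×ℝ×ℝ) =>
      MvPolynomial.coeff d p * (u.1 ^ d 0 * u.2.1 ^ d 1 * u.2.2 ^ d 2))
    (fun d _ => S_int (d 0) (d 1) (d 2) (MvPolynomial.coeff d p))]
  simp_rw [MeasureTheory.integral_const_mul, Finset.mul_sum]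
  have step1 : ∀ d ∈ p.support, MvPolynomial.coeff d p *
      (∫ u in {u : ℝ × ℝ × ℝ |
            |u.2.2| < 1 ∧ |u.1| < (1 - u.2.2) / 2 ∧ |u.2.1| < (1 - u.2.2) / 2},
        u.1 ^ d 0 * u.2.1 ^ d 1 * u.2.2 ^ d 2)
      = ∑ e, ∑ cc, ((1 - z e) / 2) ^ 2 * v e * w cc *
          (MvPolynomial.coeff d p * ((((1 - z e) / 2) * (nd cc).1) ^ d 0 *
            (((1 - z e) / 2) * (nd cc).2) ^ d 1 * (z e) ^ d 2)) := by
    intro d hd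
    rw [key _ _ _ (hdeg d hd), Finset.mul_sum]
    refine Finset.sum_congr rfl fun e _ => ?_
    rw [Finset.mul_sum]
    exact Finset.sum_congr rfl fun cc _ => by ring
  rw [Finset.sum_congr rfl step1, Finset.sum_comm]
  exact Finset.sum_congr rfl fun e _ => Finset.sum_comm
end

section
/- Let q be a natural number and let p be a real polynomial in three variables of total degree at most q. Then the function (x,y,z) ↦ ((1-z)/2)² · p(((1-z)/2)·x, ((1-z)/2)·y, z) coincides with a real polynomial in (x,y,z) of total degree at most 2q + 2, and its integral over the cube equals ∫_{pyr} p(x,y,z) dx dy dz. -/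
open MeasureTheory

section DuffyAux
open MvPolynomial

lemma eval_bind₁' (f : Fin 3 → ℝ) (g : Fin 3 → MvPolynomial (Fin 3) ℝ)
    (φ : MvPolynomial (Fin 3) ℝ) :
    eval f (bind₁ g φ) = eval (fun i => eval f (g i)) φ := by
  exact eval₂Hom_bind₁ (RingHom.id ℝ) f g φ

lemma bind1_deg {k : ℕ} (g : Fin 3 → MvPolynomial (Fin 3) ℝ)
    (hg : ∀ i, (g i).totalDegree ≤ k) (p : MvPolynomial (Fin 3) ℝ) :
    (bind₁ g p).totalDegree ≤ k * p.totalDegree := by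
  conv_lhs => rw [p.as_sum, map_sum]
  refine (totalDegree_finset_sum _ _).trans (Finset.sup_le fun m hm => ?_)
  rw [bind₁_monomial]
  refine (totalDegree_mul _ _).trans ?_
  have h1 : (C (coeff m p) : MvPolynomial (Fin 3) ℝ).totalDegree = 0 := totalDegree_C _
  rw [h1, zero_add]
  refine (totalDegree_finset_prod _ _).trans ?_
  calc ∑ i ∈ m.support, (g i ^ m i).totalDegree
      ≤ ∑ i ∈ m.support, m i * k := by
        refine Finset.sum_le_sum fun i _ => ?_
        exact (totalDegree_pow _ _).trans (Nat.mul_le_mul_left _ (hg i))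
    _ = (∑ i ∈ m.support, m i) * k := by rw [Finset.sum_mul]
    _ ≤ p.totalDegree * k := Nat.mul_le_mul_right _ (le_totalDegree hm)
    _ = k * p.totalDegree := Nat.mul_comm _ _

lemma part1 (q : ℕ) (p : MvPolynomial (Fin 3) ℝ) (hp : p.totalDegree ≤ q) :
    ∃ r : MvPolynomial (Fin 3) ℝ, r.totalDegree ≤ 2 * q + 2 ∧
      ∀ x y z : ℝ, MvPolynomial.eval ![x, y, z] r =
        ((1 - z) / 2) ^ 2 *
          MvPolynomial.eval ![((1 - z) / 2) * x, ((1 - z) / 2) * y, z] p := by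
  set g : Fin 3 → MvPolynomial (Fin 3) ℝ :=
    ![C 2⁻¹ * ((1 - X 2) * X 0), C 2⁻¹ * ((1 - X 2) * X 1), X 2] with hg
  have h1 : ((1 : MvPolynomial (Fin 3) ℝ) - X 2).totalDegree ≤ 1 := by
    refine (totalDegree_sub _ _).trans ?_
    simp [totalDegree_one, totalDegree_X]
  have hgdeg : ∀ i, (g i).totalDegree ≤ 2 := by
    intro i
    fin_cases i <;> simp only [hg, Matrix.cons_val_zero, Matrix.cons_val_one, Matrix.head_cons,
      Matrix.cons_val_two, Matrix.tail_cons]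
    · refine (totalDegree_mul _ _).trans ?_
      have := totalDegree_C (σ := Fin 3) (2⁻¹ : ℝ)
      refine le_trans (add_le_add le_rfl (totalDegree_mul _ _)) ?_
      simp [this, totalDegree_X]; omega
    · refine (totalDegree_mul _ _).trans ?_
      have := totalDegree_C (σ := Fin 3) (2⁻¹ : ℝ)
      refine le_trans (add_le_add le_rfl (totalDegree_mul _ _)) ?_
      simp [this, totalDegree_X]; omega
    · simp [totalDegree_X]
  refine ⟨C 4⁻¹ * (1 - X 2) ^ 2 * bind₁ g p, ?_, ?_⟩
  · refine (totalDegree_mul _ _).trans ?_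
    have h2 : (((1 : MvPolynomial (Fin 3) ℝ) - X 2) ^ 2).totalDegree ≤ 2 := by
      refine (totalDegree_pow _ _).trans ?_; omega
    have h3 := bind1_deg g hgdeg p
    have h4 := (totalDegree_mul (C 4⁻¹ : MvPolynomial (Fin 3) ℝ) ((1 - X 2) ^ 2)).trans
      (by simp [totalDegree_C]; exact h2)
    have : p.totalDegree * 2 ≤ q * 2 := Nat.mul_le_mul_right _ hp
    omega
  · intro x y z
    rw [map_mul, map_mul, eval_bind₁']
    have hv : (fun i => eval ![x, y, z] (g i)) = ![((1 - z) / 2) * x, ((1 - z) / 2) * y, z] := by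
      funext i
      fin_cases i <;> simp [hg] <;> ring
    rw [hv]
    simp only [map_pow, map_sub, map_one, eval_C, eval_X, Matrix.cons_val_two, Matrix.tail_cons,
      Matrix.head_cons]
    ring

lemma scale_integral {s : ℝ} (hs : 0 < s) (h : ℝ → ℝ) :
    ∫ x in Set.Ioo (-s) s, h x = s * ∫ x in Set.Ioo (-1:ℝ) 1, h (s * x) := by
  have h1 : ∫ x in Set.Ioo (-1:ℝ) 1, h (s * x) = ∫ x in (-1:ℝ)..1, h (s * x) := by
    rw [intervalIntegral.integral_of_le (by norm_num), integral_Ioc_eq_integral_Ioo]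
  rw [h1, intervalIntegral.integral_comp_mul_left h hs.ne', smul_eq_mul]
  have h2 : s * -1 = -s := by ring
  rw [h2, mul_one, intervalIntegral.integral_of_le (by linarith), integral_Ioc_eq_integral_Ioo]
  field_simp

lemma cont3 (p : MvPolynomial (Fin 3) ℝ) :
    Continuous (fun u : ℝ × ℝ × ℝ => eval ![u.1, u.2.1, u.2.2] p) := by
  refine (MvPolynomial.continuous_eval (p := p)).comp (continuous_pi fun i => ?_)
  fin_cases i <;> simp <;> fun_prop

lemma int2 {h : ℝ × ℝ → ℝ} (hc : Continuous h) (a : ℝ) :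
    IntegrableOn h (Set.Ioo (-a) a ×ˢ Set.Ioo (-a) a) := by
  refine (hc.integrableOn_Icc (a := ((-a : ℝ), (-a : ℝ))) (b := (a, a))).mono_set ?_
  rintro ⟨x, y⟩ ⟨hx, hy⟩
  exact ⟨⟨hx.1.le, hy.1.le⟩, hx.2.le, hy.2.le⟩

lemma part2 (p : MvPolynomial (Fin 3) ℝ) :
    (∫ u in {u : ℝ × ℝ × ℝ | |u.1| < 1 ∧ |u.2.1| < 1 ∧ |u.2.2| < 1},
        ((1 - u.2.2) / 2) ^ 2 *
          MvPolynomial.eval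
            ![((1 - u.2.2) / 2) * u.1, ((1 - u.2.2) / 2) * u.2.1, u.2.2] p) =
      ∫ u in {u : ℝ × ℝ × ℝ |
          |u.2.2| < 1 ∧ |u.1| < (1 - u.2.2) / 2 ∧ |u.2.1| < (1 - u.2.2) / 2},
        MvPolynomial.eval ![u.1, u.2.1, u.2.2] p := by
  set F : ℝ × ℝ × ℝ → ℝ := fun u => eval ![u.1, u.2.1, u.2.2] p with hF
  set G : ℝ × ℝ × ℝ → ℝ := fun u =>
    ((1 - u.2.2) / 2) ^ 2 * F (((1 - u.2.2) / 2) * u.1, ((1 - u.2.2) / 2) * u.2.1, u.2.2) with hG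
  have hFc : Continuous F := cont3 p
  have hGc : Continuous G := by
    apply Continuous.mul
    · fun_prop
    · exact hFc.comp (by fun_prop)
  set cube : Set (ℝ × ℝ × ℝ) := {u | |u.1| < 1 ∧ |u.2.1| < 1 ∧ |u.2.2| < 1} with hcube
  set pyr : Set (ℝ × ℝ × ℝ) :=
    {u | |u.2.2| < 1 ∧ |u.1| < (1 - u.2.2) / 2 ∧ |u.2.1| < (1 - u.2.2) / 2} with hpyr
  have o1 : IsOpen {u : ℝ × ℝ × ℝ | |u.1| < 1} := isOpen_lt (by fun_prop) continuous_const
  have o2 : IsOpen {u : ℝ × ℝ × ℝ | |u.2.1| < 1} := isOpen_lt (by fun_prop) continuous_const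
  have o3 : IsOpen {u : ℝ × ℝ × ℝ | |u.2.2| < 1} := isOpen_lt (by fun_prop) continuous_const
  have o4 : IsOpen {u : ℝ × ℝ × ℝ | |u.1| < (1 - u.2.2) / 2} :=
    isOpen_lt (by fun_prop) (by fun_prop)
  have o5 : IsOpen {u : ℝ × ℝ × ℝ | |u.2.1| < (1 - u.2.2) / 2} :=
    isOpen_lt (by fun_prop) (by fun_prop)
  have hcubeM : MeasurableSet cube := (o1.inter (o2.inter o3)).measurableSet
  have hpyrM : MeasurableSet pyr := (o3.inter (o4.inter o5)).measurableSet
  have hGi : IntegrableOn G cube := by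
    refine (hGc.integrableOn_Icc (a := ((-1:ℝ), ((-1:ℝ), (-1:ℝ)))) (b := (1, (1, 1)))).mono_set ?_
    rintro ⟨x, y, z⟩ ⟨hx, hy, hz⟩
    rw [abs_lt] at hx hy hz
    dsimp only at hx hy hz
    refine ⟨⟨?_, ?_, ?_⟩, ?_, ?_, ?_⟩ <;> dsimp only <;> linarith
  have hFi : IntegrableOn F pyr := by
    refine (hFc.integrableOn_Icc (a := ((-1:ℝ), ((-1:ℝ), (-1:ℝ)))) (b := (1, (1, 1)))).mono_set ?_
    rintro ⟨x, y, z⟩ ⟨hz, hx, hy⟩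
    rw [abs_lt] at hx hy hz
    dsimp only at hx hy hz
    have h1 : (1 - z) / 2 ≤ 1 := by linarith
    refine ⟨⟨?_, ?_, ?_⟩, ?_, ?_, ?_⟩ <;> dsimp only <;> linarith
  set E : (ℝ × (ℝ × ℝ)) ≃ᵐ (ℝ × ℝ × ℝ) :=
    MeasurableEquiv.prodComm.trans MeasurableEquiv.prodAssoc with hE
  have hEmp : MeasurePreserving E volume volume := by
    have h1 : MeasurePreserving (Prod.swap : ℝ × (ℝ × ℝ) → (ℝ × ℝ) × ℝ) volume volume :=
      Measure.measurePreserving_swap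
    have h2 : MeasurePreserving (MeasurableEquiv.prodAssoc : (ℝ × ℝ) × ℝ ≃ᵐ ℝ × ℝ × ℝ)
        volume volume := measurePreserving_prodAssoc _ _ _
    exact h2.comp h1
  have key : ∀ z : ℝ, (∫ xy : ℝ × ℝ, cube.indicator G (E (z, xy))) =
      ∫ xy : ℝ × ℝ, pyr.indicator F (E (z, xy)) := by
    intro z
    have hEapp : ∀ xy : ℝ × ℝ, E (z, xy) = (xy.1, xy.2, z) := fun _ => rfl
    by_cases hz : |z| < 1
    · have hz' := abs_lt.1 hz
      set s : ℝ := (1 - z) / 2 with hs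
      have hs0 : 0 < s := by rw [hs]; linarith
      have hL : (∫ xy : ℝ × ℝ, cube.indicator G (E (z, xy))) =
          ∫ x in Set.Ioo (-1:ℝ) 1, ∫ y in Set.Ioo (-1:ℝ) 1, G (x, y, z) := by
        have h1 : ∀ xy : ℝ × ℝ, cube.indicator G (E (z, xy)) =
            (Set.Ioo (-1:ℝ) 1 ×ˢ Set.Ioo (-1:ℝ) 1).indicator
              (fun xy : ℝ × ℝ => G (xy.1, xy.2, z)) xy := by
          intro xy
          rw [hEapp]
          by_cases h : xy ∈ Set.Ioo (-1:ℝ) 1 ×ˢ Set.Ioo (-1:ℝ) 1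
          · have hm : ((xy.1, xy.2, z) : ℝ × ℝ × ℝ) ∈ cube :=
              ⟨abs_lt.2 ⟨h.1.1, h.1.2⟩, abs_lt.2 ⟨h.2.1, h.2.2⟩, hz⟩
            rw [Set.indicator_of_mem hm, Set.indicator_of_mem h]
          · rw [Set.indicator_of_notMem, Set.indicator_of_notMem h]
            intro hc
            exact h ⟨abs_lt.1 hc.1, abs_lt.1 hc.2.1⟩
        simp_rw [h1]
        rw [integral_indicator ((isOpen_Ioo.prod isOpen_Ioo).measurableSet)]
        exact setIntegral_prod _ (int2 (hGc.comp (by fun_prop)) 1)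
      have hR : (∫ xy : ℝ × ℝ, pyr.indicator F (E (z, xy))) =
          ∫ x in Set.Ioo (-s) s, ∫ y in Set.Ioo (-s) s, F (x, y, z) := by
        have h1 : ∀ xy : ℝ × ℝ, pyr.indicator F (E (z, xy)) =
            (Set.Ioo (-s) s ×ˢ Set.Ioo (-s) s).indicator
              (fun xy : ℝ × ℝ => F (xy.1, xy.2, z)) xy := by
          intro xy
          rw [hEapp]
          by_cases h : xy ∈ Set.Ioo (-s) s ×ˢ Set.Ioo (-s) s
          · have hm : ((xy.1, xy.2, z) : ℝ × ℝ × ℝ) ∈ pyr :=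
              ⟨hz, abs_lt.2 ⟨h.1.1, h.1.2⟩, abs_lt.2 ⟨h.2.1, h.2.2⟩⟩
            rw [Set.indicator_of_mem hm, Set.indicator_of_mem h]
          · rw [Set.indicator_of_notMem, Set.indicator_of_notMem h]
            intro hc
            exact h ⟨abs_lt.1 hc.2.1, abs_lt.1 hc.2.2⟩
        simp_rw [h1]
        rw [integral_indicator ((isOpen_Ioo.prod isOpen_Ioo).measurableSet)]
        exact setIntegral_prod _ (int2 (hFc.comp (by fun_prop)) s)
      rw [hL, hR]
      rw [scale_integral hs0 (fun x => ∫ y in Set.Ioo (-s) s, F (x, y, z))]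
      have h2 : (fun x => ∫ y in Set.Ioo (-s) s, F (s * x, y, z)) =
          fun x => s * ∫ y in Set.Ioo (-1:ℝ) 1, F (s * x, s * y, z) := by
        funext x
        exact scale_integral hs0 (fun y => F (s * x, y, z))
      rw [h2, integral_const_mul]
      have h3 : (fun x => ∫ y in Set.Ioo (-1:ℝ) 1, G (x, y, z)) =
          fun x => s ^ 2 * ∫ y in Set.Ioo (-1:ℝ) 1, F (s * x, s * y, z) := by
        funext x
        rw [← integral_const_mul]
      rw [show (∫ x in Set.Ioo (-1:ℝ) 1, ∫ y in Set.Ioo (-1:ℝ) 1, G (x, y, z)) =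
          ∫ x in Set.Ioo (-1:ℝ) 1, s ^ 2 * ∫ y in Set.Ioo (-1:ℝ) 1, F (s * x, s * y, z)
        from by rw [← h3], integral_const_mul]
      ring
    · have h1 : ∀ xy : ℝ × ℝ, cube.indicator G (E (z, xy)) = 0 := by
        intro xy
        rw [hEapp]
        exact Set.indicator_of_notMem (fun hc => hz hc.2.2) _
      have h2 : ∀ xy : ℝ × ℝ, pyr.indicator F (E (z, xy)) = 0 := by
        intro xy
        rw [hEapp]
        exact Set.indicator_of_notMem (fun hc => hz hc.1) _
      simp_rw [h1, h2]
  have hIcube : Integrable (fun w : ℝ × (ℝ × ℝ) => cube.indicator G (E w)) volume :=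
    (hEmp.integrable_comp_emb E.measurableEmbedding).2
      ((integrable_indicator_iff hcubeM).2 hGi)
  have hIpyr : Integrable (fun w : ℝ × (ℝ × ℝ) => pyr.indicator F (E w)) volume :=
    (hEmp.integrable_comp_emb E.measurableEmbedding).2
      ((integrable_indicator_iff hpyrM).2 hFi)
  calc ∫ u in cube, G u
      = ∫ u, cube.indicator G u := (integral_indicator hcubeM).symm
    _ = ∫ w : ℝ × (ℝ × ℝ), cube.indicator G (E w) := (hEmp.integral_comp' _).symm
    _ = ∫ z : ℝ, ∫ xy : ℝ × ℝ, cube.indicator G (E (z, xy)) := integral_prod _ hIcube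
    _ = ∫ z : ℝ, ∫ xy : ℝ × ℝ, pyr.indicator F (E (z, xy)) := by simp_rw [key]
    _ = ∫ w : ℝ × (ℝ × ℝ), pyr.indicator F (E w) := (integral_prod _ hIpyr).symm
    _ = ∫ u, pyr.indicator F u := hEmp.integral_comp' _
    _ = ∫ u in pyr, F u := integral_indicator hpyrM

end DuffyAux

/-- The Duffy-type integrand `((1-z)/2)² · p(((1-z)/2)x, ((1-z)/2)y, z)`
associated with a trivariate polynomial `p` of total degree at most `q` is a polynomial
of total degree at most `2q + 2`, and its integral over the cube equals the integral of
`p` over the pyramid. -/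
theorem duffy_integrand_polynomial_and_integral
    (q : ℕ) (p : MvPolynomial (Fin 3) ℝ) (hp : p.totalDegree ≤ q) :
    (∃ r : MvPolynomial (Fin 3) ℝ, r.totalDegree ≤ 2 * q + 2 ∧
      ∀ x y z : ℝ, MvPolynomial.eval ![x, y, z] r =
        ((1 - z) / 2) ^ 2 *
          MvPolynomial.eval ![((1 - z) / 2) * x, ((1 - z) / 2) * y, z] p) ∧
    (∫ u in {u : ℝ × ℝ × ℝ | |u.1| < 1 ∧ |u.2.1| < 1 ∧ |u.2.2| < 1},
        ((1 - u.2.2) / 2) ^ 2 *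
          MvPolynomial.eval
            ![((1 - u.2.2) / 2) * u.1, ((1 - u.2.2) / 2) * u.2.1, u.2.2] p) =
      ∫ u in {u : ℝ × ℝ × ℝ |
          |u.2.2| < 1 ∧ |u.1| < (1 - u.2.2) / 2 ∧ |u.2.1| < (1 - u.2.2) / 2},
        MvPolynomial.eval ![u.1, u.2.1, u.2.2] p :=
  ⟨part1 q p hp, part2 p⟩
end

section
/- Let q be a natural number and let {(x_j, y_j, z_j, w_j)}_{j=1}^n be a quadrature rule on the cube that is exact of degree 2q + 2, i.e. ∫_{cube} r = Σ_j w_j r(x_j, y_j, z_j) for every trivariate real polynomial r of total degree at most 2q + 2. Writing α_j = (1 - z_j)/2, the Duffy-transformed rule {(α_j x_j, α_j y_j, z_j, α_j² w_j)}_{j=1}^n is exact of degree q on the pyramid: for every trivariate real polynomial p of total degree at most q, ∫_{pyr} p = Σ_{j=1}^n α_j² w_j p(α_j x_j, α_j y_j, z_j). -/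
open MeasureTheory

open Set

section Aux

lemma slice_integral (f : ℝ × ℝ × ℝ → ℝ) (hf : Continuous f) (β : ℝ → ℝ) (hβ : Measurable β)
    (hβ1 : ∀ z ∈ Set.Ioo (-1:ℝ) 1, β z ≤ 1) :
    ∫ u in {u : ℝ × ℝ × ℝ | |u.2.2| < 1 ∧ |u.1| < β u.2.2 ∧ |u.2.1| < β u.2.2}, f u
    = ∫ z in Set.Ioo (-1:ℝ) 1, ∫ x in Set.Ioo (-(β z)) (β z),
        ∫ y in Set.Ioo (-(β z)) (β z), f (x, y, z) := by
  set S : Set (ℝ × ℝ × ℝ) :=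
    {u : ℝ × ℝ × ℝ | |u.2.2| < 1 ∧ |u.1| < β u.2.2 ∧ |u.2.1| < β u.2.2} with hSdef
  have hS : MeasurableSet S := by
    apply MeasurableSet.inter
    · exact measurableSet_lt (by fun_prop) (measurable_const : Measurable fun _ : ℝ × ℝ × ℝ => (1:ℝ))
    apply MeasurableSet.inter
    · exact measurableSet_lt (by fun_prop) (hβ.comp (by fun_prop))
    · exact measurableSet_lt (by fun_prop) (hβ.comp (by fun_prop))
  have hsub : S ⊆ Icc (-1:ℝ) 1 ×ˢ (Icc (-1:ℝ) 1 ×ˢ Icc (-1:ℝ) 1) := by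
    rintro ⟨x, y, z⟩ ⟨h1, h2, h3⟩
    have hz : z ∈ Ioo (-1:ℝ) 1 := abs_lt.1 h1
    have hb := hβ1 z hz
    refine ⟨?_, ?_, ?_⟩ <;> simp only [mem_Icc]
    · have := abs_lt.1 h2; constructor <;> nlinarith [this.1, this.2]
    · have := abs_lt.1 h3; constructor <;> nlinarith [this.1, this.2]
    · exact ⟨hz.1.le, hz.2.le⟩
  have hcomp : IsCompact (Icc (-1:ℝ) 1 ×ˢ (Icc (-1:ℝ) 1 ×ˢ Icc (-1:ℝ) 1)) :=
    isCompact_Icc.prod (isCompact_Icc.prod isCompact_Icc)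
  have hint : IntegrableOn f S volume :=
    (hf.continuousOn.integrableOn_compact hcomp).mono_set hsub
  have hFint : Integrable (S.indicator f) volume := (integrable_indicator_iff hS).2 hint
  let e : ℝ × ℝ × ℝ ≃ᵐ ℝ × ℝ × ℝ :=
    (MeasurableEquiv.prodComm : ℝ × (ℝ × ℝ) ≃ᵐ (ℝ × ℝ) × ℝ).trans MeasurableEquiv.prodAssoc
  have hmp : MeasurePreserving e volume volume := by
    have h1 : MeasurePreserving (MeasurableEquiv.prodComm : ℝ × (ℝ × ℝ) ≃ᵐ (ℝ × ℝ) × ℝ)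
        volume volume := Measure.measurePreserving_swap
    exact h1.trans volume_preserving_prodAssoc
  have key : ∫ u, S.indicator f u = ∫ u, S.indicator f (e u) := (hmp.integral_comp' _).symm
  have hGint : Integrable (fun u : ℝ × ℝ × ℝ => S.indicator f (e u)) volume :=
    (hmp.integrable_comp_emb e.measurableEmbedding).2 hFint
  rw [← integral_indicator hS, key]
  rw [show (volume : Measure (ℝ × ℝ × ℝ)) = (volume : Measure ℝ).prod volume from
    Measure.volume_eq_prod ℝ (ℝ × ℝ)] at hGint ⊢
  rw [integral_prod _ hGint]
  have hz0 : ∀ z : ℝ, z ∉ Ioo (-1:ℝ) 1 →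
      (∫ xy : ℝ × ℝ, S.indicator f (e (z, xy))) = 0 := by
    intro z hz
    have h0 : ∀ xy : ℝ × ℝ, S.indicator f (e (z, xy)) = 0 := by
      intro xy
      apply indicator_of_notMem
      intro hmem
      exact hz (abs_lt.1 hmem.1)
    simp only [h0, integral_zero]
  have hres : (fun z : ℝ => ∫ xy : ℝ × ℝ, S.indicator f (e (z, xy)))
      = (Ioo (-1:ℝ) 1).indicator (fun z : ℝ => ∫ xy : ℝ × ℝ, S.indicator f (e (z, xy))) := by
    funext z
    by_cases h : z ∈ Ioo (-1:ℝ) 1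
    · rw [indicator_of_mem h]
    · rw [indicator_of_notMem h, hz0 z h]
  rw [hres, integral_indicator measurableSet_Ioo]
  apply setIntegral_congr_fun measurableSet_Ioo
  intro z hz
  dsimp only
  have hind : (fun xy : ℝ × ℝ => S.indicator f (e (z, xy)))
      = (Ioo (-(β z)) (β z) ×ˢ Ioo (-(β z)) (β z)).indicator
          (fun xy : ℝ × ℝ => f (xy.1, xy.2, z)) := by
    funext xy
    by_cases hmem : xy ∈ Ioo (-(β z)) (β z) ×ˢ Ioo (-(β z)) (β z)
    · rw [indicator_of_mem hmem]
      have : e (z, xy) ∈ S := by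
        refine ⟨abs_lt.2 ⟨hz.1, hz.2⟩, abs_lt.2 ⟨hmem.1.1, hmem.1.2⟩,
          abs_lt.2 ⟨hmem.2.1, hmem.2.2⟩⟩
      rw [indicator_of_mem this]
      rfl
    · rw [indicator_of_notMem hmem]
      apply indicator_of_notMem
      intro hS'
      exact hmem ⟨⟨(abs_lt.1 hS'.2.1).1, (abs_lt.1 hS'.2.1).2⟩,
        ⟨(abs_lt.1 hS'.2.2).1, (abs_lt.1 hS'.2.2).2⟩⟩
  rw [hind, integral_indicator (measurableSet_Ioo.prod measurableSet_Ioo)]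
  have hcont2 : Continuous fun xy : ℝ × ℝ => f (xy.1, xy.2, z) := by
    apply hf.comp; fun_prop
  have hIntOn : IntegrableOn (fun xy : ℝ × ℝ => f (xy.1, xy.2, z))
      (Ioo (-(β z)) (β z) ×ˢ Ioo (-(β z)) (β z)) volume := by
    apply (hcont2.continuousOn.integrableOn_compact (isCompact_Icc.prod isCompact_Icc)).mono_set
    exact Set.prod_mono Ioo_subset_Icc_self Ioo_subset_Icc_self
  rw [show (volume : Measure (ℝ × ℝ)) = (volume : Measure ℝ).prod volume from
    Measure.volume_eq_prod ℝ ℝ] at hIntOn ⊢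
  rw [setIntegral_prod _ hIntOn]

lemma subst_scale (h : ℝ → ℝ) {a : ℝ} (ha : 0 < a) :
    ∫ x in Set.Ioo (-a) a, h x = a * ∫ x in Set.Ioo (-1:ℝ) 1, h (a * x) := by
  have e1 : ∫ x in Set.Ioo (-1:ℝ) 1, h (a * x) = ∫ x in (-1:ℝ)..1, h (a * x) := by
    rw [intervalIntegral.integral_of_le (by norm_num), integral_Ioc_eq_integral_Ioo]
  rw [e1, intervalIntegral.integral_comp_mul_left _ ha.ne']
  have hb1 : a * (-1:ℝ) = -a := by ring
  have hb2 : a * (1:ℝ) = a := by ring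
  rw [hb1, hb2, intervalIntegral.integral_of_le (by linarith), integral_Ioc_eq_integral_Ioo,
    smul_eq_mul, ← mul_assoc, mul_inv_cancel₀ ha.ne', one_mul]

open MvPolynomial

noncomputable def Apoly : MvPolynomial (Fin 3) ℝ := C (1/2 : ℝ) * (1 - X 2)

noncomputable def gsub : Fin 3 → MvPolynomial (Fin 3) ℝ :=
  ![Apoly * X 0, Apoly * X 1, X 2]

lemma Apoly_totalDegree : Apoly.totalDegree ≤ 1 := by
  refine (totalDegree_mul _ _).trans ?_
  rw [totalDegree_C, zero_add]
  refine (totalDegree_sub _ _).trans ?_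
  simp [totalDegree_one, totalDegree_X]

lemma gsub_totalDegree : ∀ i, (gsub i).totalDegree ≤ 2 := by
  intro i
  fin_cases i
  · show (Apoly * X 0).totalDegree ≤ 2
    calc (Apoly * X 0).totalDegree
        ≤ Apoly.totalDegree + (X 0 : MvPolynomial (Fin 3) ℝ).totalDegree := totalDegree_mul _ _
      _ ≤ 1 + 1 := add_le_add Apoly_totalDegree (le_of_eq (totalDegree_X _))
      _ = 2 := rfl
  · show (Apoly * X 1).totalDegree ≤ 2
    calc (Apoly * X 1).totalDegree
        ≤ Apoly.totalDegree + (X 1 : MvPolynomial (Fin 3) ℝ).totalDegree := totalDegree_mul _ _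
      _ ≤ 1 + 1 := add_le_add Apoly_totalDegree (le_of_eq (totalDegree_X _))
      _ = 2 := rfl
  · show (X 2 : MvPolynomial (Fin 3) ℝ).totalDegree ≤ 2
    rw [totalDegree_X]; omega

lemma td_bind (g : Fin 3 → MvPolynomial (Fin 3) ℝ) (d : ℕ) (hg : ∀ i, (g i).totalDegree ≤ d)
    (p : MvPolynomial (Fin 3) ℝ) : (bind₁ g p).totalDegree ≤ d * p.totalDegree := by
  have h : bind₁ g p = eval₂ C g p := by
    rw [show bind₁ g p = aeval g p from rfl, aeval_def, algebraMap_eq]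
  rw [h, eval₂_eq]
  refine (totalDegree_finset_sum _ _).trans (Finset.sup_le fun m hm => ?_)
  refine (totalDegree_mul _ _).trans ?_
  rw [totalDegree_C, zero_add]
  refine (totalDegree_finset_prod _ _).trans ?_
  calc ∑ i ∈ m.support, (g i ^ m i).totalDegree
      ≤ ∑ i ∈ m.support, m i * d := by
        refine Finset.sum_le_sum fun i _ => ?_
        exact (totalDegree_pow _ _).trans (Nat.mul_le_mul_left _ (hg i))
    _ = (∑ i ∈ m.support, m i) * d := by rw [Finset.sum_mul]
    _ ≤ p.totalDegree * d := Nat.mul_le_mul_right _ (le_totalDegree hm)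
    _ = d * p.totalDegree := Nat.mul_comm _ _

lemma eval_bind (v : Fin 3 → ℝ) (g : Fin 3 → MvPolynomial (Fin 3) ℝ) (p : MvPolynomial (Fin 3) ℝ) :
    eval v (bind₁ g p) = eval (fun i => eval v (g i)) p :=
  eval₂Hom_bind₁ _ _ _ _

lemma eval_r (p : MvPolynomial (Fin 3) ℝ) (x y z : ℝ) :
    eval ![x, y, z] (Apoly ^ 2 * bind₁ gsub p)
      = ((1 - z) / 2) ^ 2 * eval ![(1 - z) / 2 * x, (1 - z) / 2 * y, z] p := by
  rw [map_mul, map_pow, eval_bind]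
  have h1 : eval ![x, y, z] Apoly = (1 - z) / 2 := by
    simp [Apoly]
    ring
  have h2 : (fun i => eval ![x, y, z] (gsub i)) = ![(1 - z) / 2 * x, (1 - z) / 2 * y, z] := by
    funext i
    fin_cases i
    · show eval ![x, y, z] (Apoly * X 0) = (1 - z) / 2 * x
      rw [map_mul, h1, eval_X]; norm_num
    · show eval ![x, y, z] (Apoly * X 1) = (1 - z) / 2 * y
      rw [map_mul, h1, eval_X]; norm_num
    · show eval ![x, y, z] (X 2 : MvPolynomial (Fin 3) ℝ) = z
      rw [eval_X]; rfl
  rw [h1, h2]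

lemma cont_eval (p : MvPolynomial (Fin 3) ℝ) :
    Continuous fun u : ℝ × ℝ × ℝ => eval ![u.1, u.2.1, u.2.2] p := by
  have h1 : Continuous fun u : ℝ × ℝ × ℝ => (![u.1, u.2.1, u.2.2] : Fin 3 → ℝ) := by
    apply continuous_pi
    intro i
    fin_cases i
    · exact continuous_fst
    · exact continuous_snd.fst
    · exact continuous_snd.snd
  have h2 : Continuous ((fun v : Fin 3 → ℝ => eval v p) ∘
      fun u : ℝ × ℝ × ℝ => ![u.1, u.2.1, u.2.2]) :=
    Continuous.comp (MvPolynomial.continuous_eval p) h1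
  exact h2

end Aux

/-- A degree-`(2q+2)` exact quadrature rule on the cube yields, via the
Duffy transformation, a degree-`q` exact quadrature rule on the pyramid. -/
theorem duffy_transformed_rule_exact_on_pyramid
    (q n : ℕ) (nd : Fin n → ℝ × ℝ × ℝ) (w : Fin n → ℝ)
    (hndCube : ∀ j, |(nd j).1| < 1 ∧ |(nd j).2.1| < 1 ∧ |(nd j).2.2| < 1)
    (hcube : ∀ r : MvPolynomial (Fin 3) ℝ, r.totalDegree ≤ 2 * q + 2 →
      (∫ u in {u : ℝ × ℝ × ℝ | |u.1| < 1 ∧ |u.2.1| < 1 ∧ |u.2.2| < 1},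
          MvPolynomial.eval ![u.1, u.2.1, u.2.2] r) =
        ∑ j, w j * MvPolynomial.eval ![(nd j).1, (nd j).2.1, (nd j).2.2] r) :
    ∀ p : MvPolynomial (Fin 3) ℝ, p.totalDegree ≤ q →
      (∫ u in {u : ℝ × ℝ × ℝ |
            |u.2.2| < 1 ∧ |u.1| < (1 - u.2.2) / 2 ∧ |u.2.1| < (1 - u.2.2) / 2},
          MvPolynomial.eval ![u.1, u.2.1, u.2.2] p) =
        ∑ j, ((1 - (nd j).2.2) / 2) ^ 2 * w j *
          MvPolynomial.eval
            ![((1 - (nd j).2.2) / 2) * (nd j).1,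
              ((1 - (nd j).2.2) / 2) * (nd j).2.1, (nd j).2.2] p := by
  intro p hp
  set r : MvPolynomial (Fin 3) ℝ := Apoly ^ 2 * MvPolynomial.bind₁ gsub p with hrdef
  have hdeg : r.totalDegree ≤ 2 * q + 2 := by
    refine (MvPolynomial.totalDegree_mul _ _).trans ?_
    have h1 : (Apoly ^ 2).totalDegree ≤ 2 :=
      (MvPolynomial.totalDegree_pow _ _).trans
        (by have := Apoly_totalDegree; omega)
    have h2 : (MvPolynomial.bind₁ gsub p).totalDegree ≤ 2 * q :=
      (td_bind gsub 2 gsub_totalDegree p).trans (Nat.mul_le_mul_left _ hp)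
    omega
  have hc := hcube r hdeg
  have hf : Continuous fun u : ℝ × ℝ × ℝ => MvPolynomial.eval ![u.1, u.2.1, u.2.2] p :=
    cont_eval p
  have hfr : Continuous fun u : ℝ × ℝ × ℝ => MvPolynomial.eval ![u.1, u.2.1, u.2.2] r :=
    cont_eval r
  -- pyramid slice
  have hpyr :
      (∫ u in {u : ℝ × ℝ × ℝ |
            |u.2.2| < 1 ∧ |u.1| < (1 - u.2.2) / 2 ∧ |u.2.1| < (1 - u.2.2) / 2},
          MvPolynomial.eval ![u.1, u.2.1, u.2.2] p)
      = ∫ z in Ioo (-1:ℝ) 1, ∫ x in Ioo (-((1 - z)/2)) ((1 - z)/2),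
          ∫ y in Ioo (-((1 - z)/2)) ((1 - z)/2),
            MvPolynomial.eval ![x, y, z] p := by
    exact slice_integral _ hf (fun z => (1 - z)/2) (by fun_prop)
      (fun z hz => by linarith [hz.1])
  -- cube slice
  have hcset : {u : ℝ × ℝ × ℝ | |u.1| < 1 ∧ |u.2.1| < 1 ∧ |u.2.2| < 1}
      = {u : ℝ × ℝ × ℝ | |u.2.2| < 1 ∧ |u.1| < (1:ℝ) ∧ |u.2.1| < (1:ℝ)} := by
    ext u; simp only [mem_setOf_eq]; tauto
  have hcub :
      (∫ u in {u : ℝ × ℝ × ℝ | |u.1| < 1 ∧ |u.2.1| < 1 ∧ |u.2.2| < 1},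
          MvPolynomial.eval ![u.1, u.2.1, u.2.2] r)
      = ∫ z in Ioo (-1:ℝ) 1, ∫ x in Ioo (-(1:ℝ)) 1, ∫ y in Ioo (-(1:ℝ)) 1,
          MvPolynomial.eval ![x, y, z] r := by
    rw [hcset]
    exact slice_integral _ hfr (fun _ => (1:ℝ)) measurable_const (fun z _ => le_refl 1)
  -- middle equality
  have hmid : (∫ z in Ioo (-1:ℝ) 1, ∫ x in Ioo (-((1 - z)/2)) ((1 - z)/2),
          ∫ y in Ioo (-((1 - z)/2)) ((1 - z)/2), MvPolynomial.eval ![x, y, z] p)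
      = ∫ z in Ioo (-1:ℝ) 1, ∫ x in Ioo (-(1:ℝ)) 1, ∫ y in Ioo (-(1:ℝ)) 1,
          MvPolynomial.eval ![x, y, z] r := by
    apply setIntegral_congr_fun measurableSet_Ioo
    intro z hz
    dsimp only
    have hαz : 0 < (1 - z)/2 := by linarith [hz.2]
    calc (∫ x in Ioo (-((1 - z)/2)) ((1 - z)/2),
            ∫ y in Ioo (-((1 - z)/2)) ((1 - z)/2), MvPolynomial.eval ![x, y, z] p)
        = ∫ x in Ioo (-((1 - z)/2)) ((1 - z)/2),
            (1 - z)/2 * ∫ y in Ioo (-1:ℝ) 1,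
              MvPolynomial.eval ![x, (1 - z)/2 * y, z] p := by
          refine setIntegral_congr_fun measurableSet_Ioo fun x _ => ?_
          exact subst_scale (fun y => MvPolynomial.eval ![x, y, z] p) hαz
      _ = (1 - z)/2 * ∫ x in Ioo (-((1 - z)/2)) ((1 - z)/2),
            ∫ y in Ioo (-1:ℝ) 1, MvPolynomial.eval ![x, (1 - z)/2 * y, z] p :=
          integral_const_mul _ _
      _ = (1 - z)/2 * ((1 - z)/2 * ∫ x in Ioo (-1:ℝ) 1,
            ∫ y in Ioo (-1:ℝ) 1,
              MvPolynomial.eval ![(1 - z)/2 * x, (1 - z)/2 * y, z] p) := by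
          rw [subst_scale (fun x => ∫ y in Ioo (-1:ℝ) 1,
            MvPolynomial.eval ![x, (1 - z)/2 * y, z] p) hαz]
      _ = ∫ x in Ioo (-(1:ℝ)) 1, ∫ y in Ioo (-(1:ℝ)) 1,
            MvPolynomial.eval ![x, y, z] r := by
          rw [show ((1 - z)/2 * ((1 - z)/2 * ∫ x in Ioo (-1:ℝ) 1,
              ∫ y in Ioo (-1:ℝ) 1,
                MvPolynomial.eval ![(1 - z)/2 * x, (1 - z)/2 * y, z] p))
            = ((1 - z)/2)^2 * ∫ x in Ioo (-1:ℝ) 1, ∫ y in Ioo (-1:ℝ) 1,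
                MvPolynomial.eval ![(1 - z)/2 * x, (1 - z)/2 * y, z] p from by ring]
          refine Eq.symm ?_
          calc (∫ x in Ioo (-(1:ℝ)) 1, ∫ y in Ioo (-(1:ℝ)) 1,
                MvPolynomial.eval ![x, y, z] r)
              = ∫ x in Ioo (-(1:ℝ)) 1, ((1 - z)/2)^2 * ∫ y in Ioo (-(1:ℝ)) 1,
                  MvPolynomial.eval ![(1 - z)/2 * x, (1 - z)/2 * y, z] p := by
                refine setIntegral_congr_fun measurableSet_Ioo fun x _ => ?_
                rw [← integral_const_mul]
                refine setIntegral_congr_fun measurableSet_Ioo fun y _ => ?_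
                exact eval_r p x y z
            _ = ((1 - z)/2)^2 * ∫ x in Ioo (-(1:ℝ)) 1, ∫ y in Ioo (-(1:ℝ)) 1,
                  MvPolynomial.eval ![(1 - z)/2 * x, (1 - z)/2 * y, z] p :=
                integral_const_mul _ _
  have hsum : (∑ j, w j * MvPolynomial.eval ![(nd j).1, (nd j).2.1, (nd j).2.2] r)
      = ∑ j, ((1 - (nd j).2.2) / 2) ^ 2 * w j *
          MvPolynomial.eval
            ![((1 - (nd j).2.2) / 2) * (nd j).1,
              ((1 - (nd j).2.2) / 2) * (nd j).2.1, (nd j).2.2] p := by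
    refine Finset.sum_congr rfl fun j _ => ?_
    rw [hrdef, eval_r]
    ring
  rw [hpyr, hmid, ← hcub, hc, hsum]
end
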